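/- Under the non-degeneracy assumption that every prefix w of some string of L with positive p-mass and length less than T satisfies ∑_{y∈A(w)} p(y|w) > 0, one has μ_proj = μ⋆ (as probability distributions on V^T) if and only if for every prefix w with positive μ_proj-mass and length less than T, the function y ↦ Φ(y|w) is constant and strictly positive on the set {y ∈ A(w) : p(y|w) > 0}. In particular, whenever future validity is non-constant at some reachable prefix, no decoder whose sequence law is μ_proj samples from μ⋆. -/

import Mathlib

set_option linter.unusedSectionVars false


open Finset
open scoped Classical

noncomputable section

/-- `w ∈ V^t` is the length-`t` prefix of `x ∈ V^T`. -/
def PrefMatch {V : Type*} {T t : ℕ} (ht : t ≤ T) (w : Fin t → V) (x : Fin T → V) : Prop :=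
  ∀ i : Fin t, x (Fin.castLE ht i) = w i

/-- Mass of the prefix `w` under a law `p` on `V^T`: `Pr_{X∼p}[X_{1:t} = w]`. -/
def prefMass {V : Type*} [Fintype V] {T t : ℕ} (p : (Fin T → V) → ℝ) (ht : t ≤ T)
    (w : Fin t → V) : ℝ :=
  ∑ x : Fin T → V, if PrefMatch ht w x then p x else 0

/-- Conditional next-token probability `p(y | w)`. -/
def condP {V : Type*} [Fintype V] {T t : ℕ} (p : (Fin T → V) → ℝ) (ht : t + 1 ≤ T)
    (w : Fin t → V) (y : V) : ℝ :=
  prefMass p ht (Fin.snoc w y) / prefMass p (Nat.le_of_succ_le ht) w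

/-- Mass of strings of `L` extending prefix `w`: `Pr_{X∼p}[X ∈ L ∧ X_{1:t} = w]`. -/
def lMass {V : Type*} [Fintype V] {T t : ℕ} (p : (Fin T → V) → ℝ)
    (L : Finset (Fin T → V)) (ht : t ≤ T) (w : Fin t → V) : ℝ :=
  ∑ x ∈ L, if PrefMatch ht w x then p x else 0

/-- Future validity `Φ(y | w) = Pr_{X∼p}[X ∈ L | X_{1:t+1} = w·y]` when the
prefix `w·y` has positive `p`-mass, and `0` otherwise. -/
def Phi {V : Type*} [Fintype V] {T t : ℕ} (p : (Fin T → V) → ℝ)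
    (L : Finset (Fin T → V)) (ht : t + 1 ≤ T) (w : Fin t → V) (y : V) : ℝ :=
  if 0 < prefMass p ht (Fin.snoc w y)
  then lMass p L ht (Fin.snoc w y) / prefMass p ht (Fin.snoc w y)
  else 0

/-- The locally valid next-token set `A(w)`. -/
def validSet {V : Type*} [Fintype V] {T t : ℕ} (L : Finset (Fin T → V))
    (ht : t + 1 ≤ T) (w : Fin t → V) : Finset V :=
  Finset.univ.filter (fun y => ∃ x ∈ L, PrefMatch ht (Fin.snoc w y) x)

/-- The locally projected kernel `μ_proj(y | w)`, taken to be `0` whenever the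
conditioning prefix has zero `p`-mass or the token is locally invalid. -/
def projKernel {V : Type*} [Fintype V] {T t : ℕ} (p : (Fin T → V) → ℝ)
    (L : Finset (Fin T → V)) (ht : t + 1 ≤ T) (w : Fin t → V) (y : V) : ℝ :=
  if 0 < prefMass p (Nat.le_of_succ_le ht) w ∧ y ∈ validSet L ht w
  then condP p ht w y / ∑ y' ∈ validSet L ht w, condP p ht w y'
  else 0

/-- The length-`t` prefix of `x`. -/
def pre {V : Type*} {T : ℕ} (x : Fin T → V) (t : ℕ) (ht : t ≤ T) : Fin t → V :=
  fun i => x (Fin.castLE ht i)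

/-- The locally projected sequence law `μ_proj(x) = ∏_t μ_proj(x_{t+1} | x_{1:t})`. -/
def muProj {V : Type*} [Fintype V] {T : ℕ} (p : (Fin T → V) → ℝ)
    (L : Finset (Fin T → V)) (x : Fin T → V) : ℝ :=
  ∏ t : Fin T, projKernel p L t.isLt (pre x t.val (Nat.le_of_lt t.isLt)) (x t)


section Aux
variable {V : Type*} [Fintype V] {T : ℕ}

lemma castLE_castSucc {t : ℕ} (ht : t + 1 ≤ T) (i : Fin t) :
    Fin.castLE ht (Fin.castSucc i) = Fin.castLE (Nat.le_of_succ_le ht) i := rfl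

lemma castLE_last {t : ℕ} (ht : t + 1 ≤ T) :
    Fin.castLE ht (Fin.last t) = ⟨t, ht⟩ := rfl

lemma prefMatch_snoc_iff {t : ℕ} (ht : t + 1 ≤ T) (w : Fin t → V) (y : V) (x : Fin T → V) :
    PrefMatch ht (Fin.snoc w y) x ↔
      PrefMatch (Nat.le_of_succ_le ht) w x ∧ x ⟨t, ht⟩ = y := by
  constructor
  · intro h
    refine ⟨fun i => ?_, ?_⟩
    · have := h (Fin.castSucc i)
      rwa [castLE_castSucc, Fin.snoc_castSucc] at this
    · have := h (Fin.last t)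
      rwa [castLE_last, Fin.snoc_last] at this
  · rintro ⟨h1, h2⟩ i
    refine Fin.lastCases ?_ (fun j => ?_) i
    · rw [castLE_last, Fin.snoc_last]; exact h2
    · rw [castLE_castSucc, Fin.snoc_castSucc]; exact h1 j

lemma pre_succ (x : Fin T → V) {t : ℕ} (ht : t + 1 ≤ T) :
    pre x (t+1) ht = Fin.snoc (pre x t (Nat.le_of_succ_le ht)) (x ⟨t, ht⟩) := by
  funext i
  refine Fin.lastCases ?_ (fun j => ?_) i
  · rw [Fin.snoc_last]; rfl
  · rw [Fin.snoc_castSucc]; rfl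

lemma prefMatch_pre (x : Fin T → V) {t : ℕ} (ht : t ≤ T) : PrefMatch ht (pre x t ht) x :=
  fun _ => rfl

lemma pre_eq_of_match {x : Fin T → V} {t : ℕ} {ht : t ≤ T} {w : Fin t → V}
    (h : PrefMatch ht w x) : pre x t ht = w := funext fun i => h i

lemma prefMass_nonneg {t : ℕ} {p : (Fin T → V) → ℝ} (hp0 : ∀ x, 0 ≤ p x) (ht : t ≤ T)
    (w : Fin t → V) : 0 ≤ prefMass p ht w :=
  Finset.sum_nonneg fun x _ => by by_cases h : PrefMatch ht w x <;> simp [prefMass, h, hp0 x]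

lemma lMass_nonneg {t : ℕ} {p : (Fin T → V) → ℝ} (hp0 : ∀ x, 0 ≤ p x)
    (L : Finset (Fin T → V)) (ht : t ≤ T) (w : Fin t → V) : 0 ≤ lMass p L ht w :=
  Finset.sum_nonneg fun x _ => by by_cases h : PrefMatch ht w x <;> simp [h, hp0 x]

lemma lMass_le_prefMass {t : ℕ} {p : (Fin T → V) → ℝ} (hp0 : ∀ x, 0 ≤ p x)
    (L : Finset (Fin T → V)) (ht : t ≤ T) (w : Fin t → V) :
    lMass p L ht w ≤ prefMass p ht w := by
  refine Finset.sum_le_sum_of_subset_of_nonneg (Finset.subset_univ L) ?_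
  intro x _ _
  by_cases h : PrefMatch ht w x <;> simp [h, hp0 x]

lemma le_prefMass_of_match {t : ℕ} {p : (Fin T → V) → ℝ} (hp0 : ∀ x, 0 ≤ p x) {ht : t ≤ T}
    {w : Fin t → V} {x : Fin T → V} (h : PrefMatch ht w x) : p x ≤ prefMass p ht w := by
  have := Finset.single_le_sum (f := fun z => if PrefMatch ht w z then p z else 0)
    (fun z _ => by by_cases hz : PrefMatch ht w z <;> simp [hz, hp0 z]) (Finset.mem_univ x)
  simpa [h, prefMass] using this

lemma prefMass_split {t : ℕ} {p : (Fin T → V) → ℝ} (ht : t + 1 ≤ T) (w : Fin t → V) :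
    prefMass p (Nat.le_of_succ_le ht) w = ∑ y : V, prefMass p ht (Fin.snoc w y) := by
  unfold prefMass
  rw [Finset.sum_comm]
  refine Finset.sum_congr rfl fun x _ => ?_
  by_cases h : PrefMatch (Nat.le_of_succ_le ht) w x
  · rw [Finset.sum_eq_single (x ⟨t, ht⟩)]
    · simp [prefMatch_snoc_iff, h]
    · intro y _ hy; simp [prefMatch_snoc_iff]; intro _ h2; exact absurd h2.symm hy
    · simp
  · simp [prefMatch_snoc_iff, h]

lemma lMass_split {t : ℕ} {p : (Fin T → V) → ℝ} (L : Finset (Fin T → V)) (ht : t + 1 ≤ T)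
    (w : Fin t → V) :
    lMass p L (Nat.le_of_succ_le ht) w = ∑ y : V, lMass p L ht (Fin.snoc w y) := by
  unfold lMass
  rw [Finset.sum_comm]
  refine Finset.sum_congr rfl fun x _ => ?_
  by_cases h : PrefMatch (Nat.le_of_succ_le ht) w x
  · rw [Finset.sum_eq_single (x ⟨t, ht⟩)]
    · simp [prefMatch_snoc_iff, h]
    · intro y _ hy; simp [prefMatch_snoc_iff]; intro _ h2; exact absurd h2.symm hy
    · simp
  · simp [prefMatch_snoc_iff, h]


lemma prefMass_zero {p : (Fin T → V) → ℝ} (h : (0:ℕ) ≤ T) (w : Fin 0 → V) :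
    prefMass p h w = ∑ x, p x := by
  unfold prefMass
  refine Finset.sum_congr rfl fun x _ => ?_
  have : PrefMatch h w x := fun i => i.elim0
  simp [this]

lemma lMass_zero {p : (Fin T → V) → ℝ} (L : Finset (Fin T → V)) (h : (0:ℕ) ≤ T)
    (w : Fin 0 → V) : lMass p L h w = ∑ x ∈ L, p x := by
  unfold lMass
  refine Finset.sum_congr rfl fun x _ => ?_
  have : PrefMatch h w x := fun i => i.elim0
  simp [this]

lemma prefMatch_top_iff {x z : Fin T → V} (h : T ≤ T) :
    PrefMatch h (pre x T h) z ↔ z = x := by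
  constructor
  · intro hm; funext i
    have := hm i
    simpa [pre, Fin.castLE] using this
  · rintro rfl i; rfl

lemma prefMass_top {p : (Fin T → V) → ℝ} (h : T ≤ T) (x : Fin T → V) :
    prefMass p h (pre x T h) = p x := by
  unfold prefMass
  rw [Finset.sum_eq_single x]
  · simp [prefMatch_top_iff]
  · intro z _ hz; simp [prefMatch_top_iff, hz]
  · simp [prefMatch_top_iff]

lemma lMass_top {p : (Fin T → V) → ℝ} (L : Finset (Fin T → V)) (h : T ≤ T) (x : Fin T → V) :
    lMass p L h (pre x T h) = if x ∈ L then p x else 0 := by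
  unfold lMass
  by_cases hx : x ∈ L
  · rw [Finset.sum_eq_single x]
    · simp [prefMatch_top_iff, hx]
    · intro z _ hz; simp [prefMatch_top_iff, hz]
    · intro hc; exact absurd hx hc
  · rw [Finset.sum_eq_zero, if_neg hx]
    intro z hz
    rw [if_neg]
    intro hm
    exact hx ((prefMatch_top_iff h).mp hm ▸ hz)

/-- ℕ-indexed prefix mass along `x`. -/
def Qf (p : (Fin T → V) → ℝ) (x : Fin T → V) (s : ℕ) : ℝ :=
  if h : s ≤ T then prefMass p h (pre x s h) else 1

/-- ℕ-indexed lMass along `x`. -/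
def Gf (p : (Fin T → V) → ℝ) (L : Finset (Fin T → V)) (x : Fin T → V) (s : ℕ) : ℝ :=
  if h : s ≤ T then lMass p L h (pre x s h) else 0

/-- ℕ-indexed normalizer along `x`. -/
def Sf (p : (Fin T → V) → ℝ) (L : Finset (Fin T → V)) (x : Fin T → V) (s : ℕ) : ℝ :=
  if h : s + 1 ≤ T then
    ∑ y ∈ validSet L h (pre x s (Nat.le_of_succ_le h)),
      condP p h (pre x s (Nat.le_of_succ_le h)) y
  else 1

/-- ℕ-indexed projected kernel along `x`. -/
def Kf (p : (Fin T → V) → ℝ) (L : Finset (Fin T → V)) (x : Fin T → V) (s : ℕ) : ℝ :=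
  if h : s + 1 ≤ T then
    projKernel p L h (pre x s (Nat.le_of_succ_le h)) (x ⟨s, h⟩)
  else 1

lemma muProj_eq_prod_Kf (p : (Fin T → V) → ℝ) (L : Finset (Fin T → V)) (x : Fin T → V) :
    muProj p L x = ∏ s ∈ Finset.range T, Kf p L x s := by
  rw [← Fin.prod_univ_eq_prod_range]
  unfold muProj Kf
  refine Finset.prod_congr rfl fun t _ => ?_
  rw [dif_pos (show (t:ℕ)+1 ≤ T from t.isLt)]

lemma Qf_succ_eq (p : (Fin T → V) → ℝ) (x : Fin T → V) {s : ℕ} (h : s + 1 ≤ T) :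
    Qf p x (s+1) = prefMass p h (Fin.snoc (pre x s (Nat.le_of_succ_le h)) (x ⟨s, h⟩)) := by
  unfold Qf
  rw [dif_pos h, pre_succ x h]

lemma condP_eq_Qf (p : (Fin T → V) → ℝ) (x : Fin T → V) {s : ℕ} (h : s + 1 ≤ T) :
    condP p h (pre x s (Nat.le_of_succ_le h)) (x ⟨s, h⟩) = Qf p x (s+1) / Qf p x s := by
  unfold condP
  rw [Qf_succ_eq p x h]
  unfold Qf
  rw [dif_pos (Nat.le_of_succ_le h)]


lemma condP_nonneg {t : ℕ} {p : (Fin T → V) → ℝ} (hp0 : ∀ x, 0 ≤ p x) (ht : t + 1 ≤ T)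
    (w : Fin t → V) (y : V) : 0 ≤ condP p ht w y :=
  div_nonneg (prefMass_nonneg hp0 ht _) (prefMass_nonneg hp0 _ w)

lemma projKernel_nonneg {t : ℕ} {p : (Fin T → V) → ℝ} (hp0 : ∀ x, 0 ≤ p x)
    (L : Finset (Fin T → V)) (ht : t + 1 ≤ T) (w : Fin t → V) (y : V) :
    0 ≤ projKernel p L ht w y := by
  unfold projKernel
  split
  · exact div_nonneg (condP_nonneg hp0 ht w y)
      (Finset.sum_nonneg fun y' _ => condP_nonneg hp0 ht w y')
  · exact le_refl 0

lemma muProj_nonneg {p : (Fin T → V) → ℝ} (hp0 : ∀ x, 0 ≤ p x) (L : Finset (Fin T → V))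
    (x : Fin T → V) : 0 ≤ muProj p L x :=
  Finset.prod_nonneg fun t _ => projKernel_nonneg hp0 L _ _ _

lemma sum_projKernel {t : ℕ} {p : (Fin T → V) → ℝ} (L : Finset (Fin T → V)) (ht : t + 1 ≤ T)
    (w : Fin t → V) (hP : 0 < prefMass p (Nat.le_of_succ_le ht) w)
    (hS : 0 < ∑ y ∈ validSet L ht w, condP p ht w y) :
    ∑ y : V, projKernel p L ht w y = 1 := by
  unfold projKernel
  simp only [hP, true_and]
  rw [Finset.sum_ite_mem, Finset.univ_inter, ← Finset.sum_div, div_self hS.ne']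

lemma mem_validSet_iff {t : ℕ} (L : Finset (Fin T → V)) (ht : t + 1 ≤ T) (w : Fin t → V)
    (y : V) : y ∈ validSet L ht w ↔ ∃ x ∈ L, PrefMatch ht (Fin.snoc w y) x := by
  simp [validSet]

lemma lMass_snoc_zero {t : ℕ} {p : (Fin T → V) → ℝ} {L : Finset (Fin T → V)} {ht : t + 1 ≤ T}
    {w : Fin t → V} {y : V} (hy : y ∉ validSet L ht w) :
    lMass p L ht (Fin.snoc w y) = 0 := by
  rw [mem_validSet_iff] at hy
  push_neg at hy
  exact Finset.sum_eq_zero fun z hz => by simp [hy z hz]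

lemma witness_drop {t : ℕ} {L : Finset (Fin T → V)} {ht : t + 1 ≤ T} {w : Fin t → V} {y : V}
    (h : ∃ x ∈ L, PrefMatch ht (Fin.snoc w y) x) :
    ∃ x ∈ L, PrefMatch (Nat.le_of_succ_le ht) w x := by
  obtain ⟨x, hx, hm⟩ := h
  exact ⟨x, hx, ((prefMatch_snoc_iff ht w y x).mp hm).1⟩

lemma prefMass_snoc_le {t : ℕ} {p : (Fin T → V) → ℝ} (hp0 : ∀ x, 0 ≤ p x) (ht : t + 1 ≤ T)
    (w : Fin t → V) (y : V) :
    prefMass p ht (Fin.snoc w y) ≤ prefMass p (Nat.le_of_succ_le ht) w := by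
  rw [prefMass_split ht w]
  exact Finset.single_le_sum (f := fun y => prefMass p ht (Fin.snoc w y))
    (fun z _ => prefMass_nonneg hp0 ht _) (Finset.mem_univ y)

lemma Qf_antitone {p : (Fin T → V) → ℝ} (hp0 : ∀ x, 0 ≤ p x) (x : Fin T → V) :
    ∀ u, u ≤ T → ∀ s, s ≤ u → Qf p x u ≤ Qf p x s := by
  intro u
  induction u with
  | zero => intro _ s hs; interval_cases s; exact le_rfl
  | succ n ih =>
    intro hu s hs
    rcases Nat.eq_or_lt_of_le hs with rfl | hlt
    · exact le_rfl
    · refine le_trans ?_ (ih (Nat.le_of_succ_le hu) s (Nat.lt_succ_iff.mp hlt))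
      rw [Qf_succ_eq p x hu]
      unfold Qf
      rw [dif_pos (Nat.le_of_succ_le hu)]
      exact prefMass_snoc_le hp0 hu _ _

lemma Qf_pos_of_ppos {p : (Fin T → V) → ℝ} (hp0 : ∀ x, 0 ≤ p x) {x : Fin T → V}
    (hx : 0 < p x) {s : ℕ} (hs : s ≤ T) : 0 < Qf p x s := by
  unfold Qf
  rw [dif_pos hs]
  exact lt_of_lt_of_le hx (le_prefMass_of_match hp0 (prefMatch_pre x hs))

lemma pre_eq_pre_of_match {t : ℕ} {ht : t ≤ T} {w : Fin t → V} {x x' : Fin T → V}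
    (h : PrefMatch ht w x) (h' : PrefMatch ht w x') {s : ℕ} (hst : s ≤ t) (hsT : s ≤ T) :
    pre x s hsT = pre x' s hsT := by
  funext i
  have e : ∀ z : Fin T → V, PrefMatch ht w z → z (Fin.castLE hsT i) = w (Fin.castLE hst i) := by
    intro z hz
    have := hz (Fin.castLE hst i)
    rwa [show Fin.castLE ht (Fin.castLE hst i) = Fin.castLE hsT i from rfl] at this
  rw [show pre x s hsT i = x (Fin.castLE hsT i) from rfl, e x h, ← e x' h']
  rfl

lemma apply_eq_of_match {t : ℕ} {ht : t ≤ T} {w : Fin t → V} {x : Fin T → V}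
    (h : PrefMatch ht w x) {s : ℕ} (hst : s < t) (hsT : s < T) :
    x ⟨s, hsT⟩ = w ⟨s, hst⟩ := by
  have := h ⟨s, hst⟩
  rwa [show Fin.castLE ht ⟨s, hst⟩ = ⟨s, hsT⟩ from rfl] at this

lemma prod_ratio (Q : ℕ → ℝ) :
    ∀ n, (∀ s, s < n → Q s ≠ 0) → Q 0 ≠ 0 →
      ∏ s ∈ Finset.range n, (Q (s+1) / Q s) = Q n / Q 0 := by
  intro n
  induction n with
  | zero => intro _ h0; simp [div_self h0]
  | succ n ih =>
    intro h h0
    rw [Finset.prod_range_succ, ih (fun s hs => h s (Nat.lt_succ_of_lt hs)) h0]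
    have hn : Q n ≠ 0 := h n (Nat.lt_succ_self n)
    field_simp


/-- `x` is locally valid: every next token along `x` is in the valid set. -/
def LV (L : Finset (Fin T → V)) (x : Fin T → V) : Prop :=
  ∀ s (h : s + 1 ≤ T), x ⟨s, h⟩ ∈ validSet L h (pre x s (Nat.le_of_succ_le h))

lemma LV_of_mem_L {L : Finset (Fin T → V)} {x : Fin T → V} (hx : x ∈ L) : LV L x := by
  intro s h
  rw [mem_validSet_iff]
  refine ⟨x, hx, ?_⟩
  rw [← pre_succ x h]
  exact prefMatch_pre x h

section WithHyps
variable {p : (Fin T → V) → ℝ} {L : Finset (Fin T → V)}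
  (hp0 : ∀ x, 0 ≤ p x) (hp1 : ∑ x, p x = 1)
  (hnd : ∀ (t : ℕ) (ht : t + 1 ≤ T) (w : Fin t → V),
      (∃ x ∈ L, PrefMatch (Nat.le_of_succ_le ht) w x) →
      0 < prefMass p (Nat.le_of_succ_le ht) w →
      0 < ∑ y ∈ validSet L ht w, condP p ht w y)

include hnd in
lemma Sf_pos {x : Fin T → V} {s : ℕ} (hs : s + 1 ≤ T)
    (hP : 0 < prefMass p (Nat.le_of_succ_le hs) (pre x s (Nat.le_of_succ_le hs)))
    (hw : ∃ z ∈ L, PrefMatch (Nat.le_of_succ_le hs) (pre x s (Nat.le_of_succ_le hs)) z) :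
    0 < Sf p L x s := by
  unfold Sf
  rw [dif_pos hs]
  exact hnd s hs _ hw hP

lemma Qf_eq (x : Fin T → V) {s : ℕ} (hs : s ≤ T) :
    Qf p x s = prefMass p hs (pre x s hs) := dif_pos hs

lemma Gf_eq (x : Fin T → V) {s : ℕ} (hs : s ≤ T) :
    Gf p L x s = lMass p L hs (pre x s hs) := dif_pos hs

lemma Sf_eq (x : Fin T → V) {s : ℕ} (hs : s + 1 ≤ T) :
    Sf p L x s = ∑ y ∈ validSet L hs (pre x s (Nat.le_of_succ_le hs)),
      condP p hs (pre x s (Nat.le_of_succ_le hs)) y := dif_pos hs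

lemma Gf_succ_eq (x : Fin T → V) {s : ℕ} (h : s + 1 ≤ T) :
    Gf p L x (s+1)
      = lMass p L h (Fin.snoc (pre x s (Nat.le_of_succ_le h)) (x ⟨s, h⟩)) := by
  unfold Gf
  rw [dif_pos h, pre_succ x h]

lemma Qf_zero (x : Fin T → V) : Qf p x 0 = ∑ z, p z := by
  unfold Qf
  rw [dif_pos (Nat.zero_le T), prefMass_zero]

lemma Qf_top (x : Fin T → V) : Qf p x T = p x := by
  unfold Qf
  rw [dif_pos (le_refl T), prefMass_top]

lemma Gf_zero (x : Fin T → V) : Gf p L x 0 = ∑ z ∈ L, p z := by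
  unfold Gf
  rw [dif_pos (Nat.zero_le T), lMass_zero]

lemma Gf_top (x : Fin T → V) : Gf p L x T = if x ∈ L then p x else 0 := by
  unfold Gf
  rw [dif_pos (le_refl T), lMass_top]

include hnd hp0 hp1 in
/-- Formula for `μ_proj` on its support. -/
lemma muProj_formula {x : Fin T → V} (hx : 0 < p x) (hlv : LV L x) :
    0 < ∏ s ∈ Finset.range T, Sf p L x s ∧
      muProj p L x = p x / ∏ s ∈ Finset.range T, Sf p L x s := by
  have hQ : ∀ s, s ≤ T → 0 < Qf p x s := fun s hs => Qf_pos_of_ppos hp0 hx hs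
  have hwit : ∀ (s : ℕ) (hs : s + 1 ≤ T),
      ∃ z ∈ L, PrefMatch (Nat.le_of_succ_le hs) (pre x s (Nat.le_of_succ_le hs)) z := by
    intro s hs
    have := hlv s hs
    rw [mem_validSet_iff] at this
    exact witness_drop this
  have hSpos : ∀ s ∈ Finset.range T, 0 < Sf p L x s := by
    intro s hs
    rw [Finset.mem_range] at hs
    refine Sf_pos hnd hs ?_ (hwit s hs)
    have := hQ s (Nat.le_of_succ_le hs)
    unfold Qf at this
    rwa [dif_pos (Nat.le_of_succ_le (n := s) hs)] at this
  have hSprod : 0 < ∏ s ∈ Finset.range T, Sf p L x s := Finset.prod_pos hSpos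
  refine ⟨hSprod, ?_⟩
  have hK : ∀ s ∈ Finset.range T, Kf p L x s = (Qf p x (s+1) / Qf p x s) / Sf p L x s := by
    intro s hs
    rw [Finset.mem_range] at hs
    unfold Kf Sf
    rw [dif_pos (show s + 1 ≤ T from hs), dif_pos (show s + 1 ≤ T from hs)]
    unfold projKernel
    rw [if_pos]
    · rw [condP_eq_Qf]
    · constructor
      · have := hQ s (Nat.le_of_succ_le hs)
        unfold Qf at this
        rwa [dif_pos (Nat.le_of_succ_le (n := s) hs)] at this
      · exact hlv s hs
  rw [muProj_eq_prod_Kf, Finset.prod_congr rfl hK, Finset.prod_div_distrib,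
    prod_ratio (Qf p x) T (fun s hs => (hQ s (Nat.le_of_succ_le hs)).ne')
      (hQ 0 (Nat.zero_le T)).ne', Qf_top, Qf_zero, hp1, div_one]

include hp0 in
lemma muProj_pos_imp (hT : 1 ≤ T) {x : Fin T → V} (hx : 0 < muProj p L x) :
    0 < p x ∧ LV L x := by
  rw [muProj_eq_prod_Kf] at hx
  have hK : ∀ s, s < T → Kf p L x s ≠ 0 := by
    intro s hs hzero
    rw [Finset.prod_eq_zero (Finset.mem_range.mpr hs) hzero] at hx
    exact lt_irrefl 0 hx
  have key : ∀ s (hs : s + 1 ≤ T),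
      x ⟨s, hs⟩ ∈ validSet L hs (pre x s (Nat.le_of_succ_le hs)) ∧ Qf p x (s+1) ≠ 0 := by
    intro s hs
    have h1 := hK s hs
    unfold Kf at h1
    rw [dif_pos hs] at h1
    unfold projKernel at h1
    by_cases hcond : 0 < prefMass p (Nat.le_of_succ_le hs) (pre x s (Nat.le_of_succ_le hs)) ∧
        x ⟨s, hs⟩ ∈ validSet L hs (pre x s (Nat.le_of_succ_le hs))
    · rw [if_pos hcond] at h1
      refine ⟨hcond.2, ?_⟩
      have hc : condP p hs (pre x s (Nat.le_of_succ_le hs)) (x ⟨s, hs⟩) ≠ 0 := by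
        intro h0
        rw [h0, zero_div] at h1
        exact h1 rfl
      rw [condP_eq_Qf p x hs] at hc
      intro h0
      rw [h0, zero_div] at hc
      exact hc rfl
    · rw [if_neg hcond] at h1
      exact absurd rfl h1
  constructor
  · obtain ⟨s, hs⟩ : ∃ s, s + 1 = T := ⟨T - 1, Nat.succ_pred_eq_of_pos hT⟩
    have := (key s (le_of_eq hs)).2
    rw [hs, Qf_top] at this
    exact lt_of_le_of_ne (hp0 x) (Ne.symm this)
  · exact fun s hs => (key s hs).1


lemma prefMatch_rfl_iff {h : T ≤ T} {w x : Fin T → V} : PrefMatch h w x ↔ x = w := by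
  constructor
  · intro hm; funext i; exact hm i
  · rintro rfl i; rfl

lemma ite_match_expand {t : ℕ} (ht' : t + 1 ≤ T) (ht : t ≤ T) (w : Fin t → V)
    (x : Fin T → V) (r : ℝ) :
    (if PrefMatch ht w x then r else 0)
      = ∑ y : V, if PrefMatch ht' (Fin.snoc w y) x then r else 0 := by
  by_cases h : PrefMatch ht w x
  · rw [if_pos h, Finset.sum_eq_single (x ⟨t, ht'⟩)]
    · rw [if_pos]
      rw [prefMatch_snoc_iff]
      exact ⟨h, rfl⟩
    · intro y _ hy
      rw [if_neg]
      rw [prefMatch_snoc_iff]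
      rintro ⟨_, h2⟩
      exact hy h2.symm
    · intro hc; exact absurd (Finset.mem_univ _) hc
  · rw [if_neg h, eq_comm]
    refine Finset.sum_eq_zero fun y _ => ?_
    rw [if_neg]
    rw [prefMatch_snoc_iff]
    rintro ⟨h1, _⟩
    exact h h1

include hp0 hnd in
lemma tailSum :
    ∀ d t (ht : t ≤ T), T - t = d → ∀ w : Fin t → V,
      0 < prefMass p ht w → (∃ z ∈ L, PrefMatch ht w z) →
      (∑ x : Fin T → V,
        if PrefMatch ht w x then ∏ s ∈ Finset.Ico t T, Kf p L x s else 0) = 1 := by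
  intro d
  induction d with
  | zero =>
    intro t ht hd w _ _
    have htT : t = T := by omega
    subst htT
    rw [Finset.sum_congr rfl fun x _ => ?_, Finset.sum_ite_eq' Finset.univ w (fun _ => (1:ℝ))]
    · simp
    · rw [Finset.Ico_self, Finset.prod_empty]
      by_cases h : PrefMatch ht w x
      · rw [if_pos h, if_pos (prefMatch_rfl_iff.mp h)]
      · rw [if_neg h, if_neg (fun he => h (prefMatch_rfl_iff.mpr he))]
  | succ d ih =>
    intro t ht hd w hP hw
    have ht' : t + 1 ≤ T := by omega
    have hS : 0 < ∑ y ∈ validSet L ht' w, condP p ht' w y := by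
      refine hnd t ht' w ?_ hP
      exact hw
    calc ∑ x : Fin T → V,
          (if PrefMatch ht w x then ∏ s ∈ Finset.Ico t T, Kf p L x s else 0)
        = ∑ x : Fin T → V, ∑ y : V,
            (if PrefMatch ht' (Fin.snoc w y) x then ∏ s ∈ Finset.Ico t T, Kf p L x s else 0) :=
          Finset.sum_congr rfl fun x _ => ite_match_expand ht' ht w x _
      _ = ∑ y : V, ∑ x : Fin T → V,
            (if PrefMatch ht' (Fin.snoc w y) x then ∏ s ∈ Finset.Ico t T, Kf p L x s else 0) :=
          Finset.sum_comm
      _ = ∑ y : V, projKernel p L ht' w y * ∑ x : Fin T → V,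
            (if PrefMatch ht' (Fin.snoc w y) x
              then ∏ s ∈ Finset.Ico (t+1) T, Kf p L x s else 0) := by
          refine Finset.sum_congr rfl fun y _ => ?_
          rw [Finset.mul_sum]
          refine Finset.sum_congr rfl fun x _ => ?_
          by_cases h : PrefMatch ht' (Fin.snoc w y) x
          · rw [if_pos h, if_pos h,
              Finset.prod_eq_prod_Ico_succ_bot (Nat.lt_of_lt_of_le (Nat.lt_succ_self t) ht'),
              show Kf p L x t = projKernel p L ht' w y from ?_]
            have h1 : PrefMatch (Nat.le_of_succ_le ht') w x :=
              ((prefMatch_snoc_iff ht' w y x).mp h).1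
            have h2 : x ⟨t, ht'⟩ = y := ((prefMatch_snoc_iff ht' w y x).mp h).2
            unfold Kf
            rw [dif_pos ht', pre_eq_of_match h1, h2]
          · rw [if_neg h, if_neg h, mul_zero]
      _ = ∑ y : V, projKernel p L ht' w y := by
          refine Finset.sum_congr rfl fun y _ => ?_
          rcases eq_or_lt_of_le (projKernel_nonneg hp0 L ht' w y) with hK | hK
          · rw [← hK, zero_mul]
          · have hcond : 0 < prefMass p (Nat.le_of_succ_le ht') w ∧ y ∈ validSet L ht' w := by
              by_contra hc
              unfold projKernel at hK
              rw [if_neg hc] at hK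
              exact lt_irrefl 0 hK
            have hPy : 0 < prefMass p ht' (Fin.snoc w y) := by
              unfold projKernel at hK
              rw [if_pos hcond] at hK
              have hcp : condP p ht' w y ≠ 0 := by
                intro h0
                rw [h0, zero_div] at hK
                exact lt_irrefl 0 hK
              have : prefMass p ht' (Fin.snoc w y) ≠ 0 := by
                intro h0
                unfold condP at hcp
                rw [h0, zero_div] at hcp
                exact hcp rfl
              exact lt_of_le_of_ne (prefMass_nonneg hp0 ht' _) (Ne.symm this)
            rw [ih (t+1) ht' (by omega) (Fin.snoc w y) hPy ?_, mul_one]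
            exact (mem_validSet_iff L ht' w y).mp hcond.2
      _ = 1 := sum_projKernel L ht' w hP hS

lemma Kf_congr' {t : ℕ} {ht : t ≤ T} {w : Fin t → V} {x x' : Fin T → V}
    (h : PrefMatch ht w x) (h' : PrefMatch ht w x') {s : ℕ} (hs : s < t) :
    Kf p L x s = Kf p L x' s := by
  have hsT : s + 1 ≤ T := le_trans hs ht
  unfold Kf
  rw [dif_pos hsT, dif_pos hsT,
    pre_eq_pre_of_match h h' (le_of_lt hs) (Nat.le_of_succ_le hsT),
    apply_eq_of_match h hs hsT, apply_eq_of_match h' hs hsT]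

include hp0 hnd in
lemma prefMass_muProj_eq {t : ℕ} (ht : t ≤ T) (w : Fin t → V)
    (hP : 0 < prefMass p ht w) (hw : ∃ z ∈ L, PrefMatch ht w z)
    {x0 : Fin T → V} (h0 : PrefMatch ht w x0) :
    prefMass (muProj p L) ht w = ∏ s ∈ Finset.range t, Kf p L x0 s := by
  unfold prefMass
  have key : ∀ x, (if PrefMatch ht w x then muProj p L x else 0)
      = (∏ s ∈ Finset.range t, Kf p L x0 s) *
        (if PrefMatch ht w x then ∏ s ∈ Finset.Ico t T, Kf p L x s else 0) := by
    intro x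
    by_cases h : PrefMatch ht w x
    · rw [if_pos h, if_pos h, muProj_eq_prod_Kf, Finset.range_eq_Ico,
        ← Finset.prod_Ico_consecutive (Kf p L x) (Nat.zero_le t) ht]
      congr 1
      rw [← Finset.range_eq_Ico]
      exact Finset.prod_congr rfl fun s hs =>
        Kf_congr' h h0 (Finset.mem_range.mp hs)
    · rw [if_neg h, if_neg h, mul_zero]
  rw [Finset.sum_congr rfl fun x _ => key x, ← Finset.mul_sum,
    tailSum hp0 hnd (T - t) t ht rfl w hP hw, mul_one]

end WithHyps

lemma exists_match_pos {μ : (Fin T → V) → ℝ} (hμ : ∀ x, 0 ≤ μ x) {t : ℕ} {ht : t ≤ T}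
    {w : Fin t → V} (h : 0 < prefMass μ ht w) : ∃ x, PrefMatch ht w x ∧ 0 < μ x := by
  by_contra hc
  push_neg at hc
  have hle : prefMass μ ht w ≤ 0 := by
    refine Finset.sum_nonpos fun x _ => ?_
    by_cases hm : PrefMatch ht w x
    · rw [if_pos hm]; exact hc x hm
    · rw [if_neg hm]
  linarith

lemma prefMass_mustar {p : (Fin T → V) → ℝ} (L : Finset (Fin T → V)) (Z : ℝ) {t : ℕ}
    (ht : t ≤ T) (w : Fin t → V) :
    prefMass (fun x => (if x ∈ L then p x else 0) / Z) ht w = lMass p L ht w / Z := by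
  unfold prefMass lMass
  rw [Finset.sum_div]
  have e : (∑ x : Fin T → V, if x ∈ L then (if PrefMatch ht w x then p x else 0) / Z else 0)
      = ∑ x ∈ L, (if PrefMatch ht w x then p x else 0) / Z := by
    rw [Finset.sum_ite_mem, Finset.univ_inter]
  rw [← e]
  refine Finset.sum_congr rfl fun x _ => ?_
  by_cases hm : PrefMatch ht w x <;> by_cases hl : x ∈ L <;> simp [hm, hl]

end Aux
/-- under the non-degeneracy assumption, `μ_proj = μ⋆` (as
distributions on `V^T`) if and only if at every prefix `w` of length `< T`
with positive `μ_proj`-mass, the future validity `y ↦ Φ(y|w)` is constant and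
strictly positive on `{y ∈ A(w) : p(y|w) > 0}`. -/
theorem stmt5 {V : Type*} [Fintype V] [Nonempty V] {T : ℕ} (hT : 1 ≤ T)
    (p : (Fin T → V) → ℝ) (hp0 : ∀ x, 0 ≤ p x) (hp1 : ∑ x, p x = 1)
    (L : Finset (Fin T → V)) (hZC : 0 < ∑ x ∈ L, p x)
    (μstar : (Fin T → V) → ℝ)
    (hμstar : ∀ x, μstar x = (if x ∈ L then p x else 0) / ∑ z ∈ L, p z)
    (hnd : ∀ (t : ℕ) (ht : t + 1 ≤ T) (w : Fin t → V),
      (∃ x ∈ L, PrefMatch (Nat.le_of_succ_le ht) w x) →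
      0 < prefMass p (Nat.le_of_succ_le ht) w →
      0 < ∑ y ∈ validSet L ht w, condP p ht w y) :
    muProj p L = μstar ↔
      ∀ (t : ℕ) (ht : t + 1 ≤ T) (w : Fin t → V),
        0 < prefMass (muProj p L) (Nat.le_of_succ_le ht) w →
        ∃ c : ℝ, 0 < c ∧
          ∀ y ∈ validSet L ht w, 0 < condP p ht w y → Phi p L ht w y = c := by
  constructor
  · -- equality ⇒ constancy
    intro heq t ht w hreach
    obtain ⟨x0, hm0, hpos0⟩ := exists_match_pos (muProj_nonneg hp0 L) hreach
    have hstar0 : 0 < μstar x0 := by rw [← heq]; exact hpos0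
    rw [hμstar x0] at hstar0
    have hx0L : x0 ∈ L := by
      by_contra h
      rw [if_neg h, zero_div] at hstar0
      exact lt_irrefl 0 hstar0
    rw [if_pos hx0L] at hstar0
    have hpx0 : 0 < p x0 := by
      have := mul_pos hstar0 hZC
      rwa [div_mul_cancel₀ _ hZC.ne'] at this
    have hQx0 : ∀ s, s ≤ T → 0 < Qf p x0 s := fun s hs => Qf_pos_of_ppos hp0 hpx0 hs
    have hSx0 : ∀ s, s < t + 1 → 0 < Sf p L x0 s := by
      intro s hs
      have hs' : s + 1 ≤ T := by omega
      refine Sf_pos hnd hs' ?_ ⟨x0, hx0L, prefMatch_pre x0 _⟩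
      have := hQx0 s (Nat.le_of_succ_le hs')
      rwa [Qf_eq x0 (Nat.le_of_succ_le hs')] at this
    have hDpos : 0 < ∏ s ∈ Finset.range (t+1), Sf p L x0 s :=
      Finset.prod_pos fun s hs => hSx0 s (Finset.mem_range.mp hs)
    refine ⟨(∑ x ∈ L, p x) / ∏ s ∈ Finset.range (t+1), Sf p L x0 s,
      div_pos hZC hDpos, ?_⟩
    intro y hyA hcp
    have hPw : 0 < prefMass p (Nat.le_of_succ_le ht) w :=
      lt_of_lt_of_le hpx0 (le_prefMass_of_match hp0 hm0)
    have hPwy : 0 < prefMass p ht (Fin.snoc w y) := by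
      have hne : prefMass p ht (Fin.snoc w y) ≠ 0 := by
        intro h0
        unfold condP at hcp
        rw [h0, zero_div] at hcp
        exact lt_irrefl 0 hcp
      exact lt_of_le_of_ne (prefMass_nonneg hp0 ht _) (Ne.symm hne)
    obtain ⟨x1, hx1L, hm1⟩ := (mem_validSet_iff L ht w y).mp hyA
    have hmarg := prefMass_muProj_eq hp0 hnd ht (Fin.snoc w y) hPwy ⟨x1, hx1L, hm1⟩ hm1
    have hx1Q : ∀ s, s ≤ t + 1 → 0 < Qf p x1 s := by
      intro s hs
      have h2 : 0 < Qf p x1 (t+1) := by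
        rw [Qf_eq x1 ht, pre_eq_of_match hm1]
        exact hPwy
      exact lt_of_lt_of_le h2 (Qf_antitone hp0 x1 (t+1) ht s hs)
    have hm1w : PrefMatch (Nat.le_of_succ_le ht) w x1 := ((prefMatch_snoc_iff ht w y x1).mp hm1).1
    have hKf : ∀ s ∈ Finset.range (t+1),
        Kf p L x1 s = (Qf p x1 (s+1) / Qf p x1 s) / Sf p L x1 s := by
      intro s hs
      rw [Finset.mem_range] at hs
      have hs' : s + 1 ≤ T := by omega
      unfold Kf
      rw [Sf_eq, dif_pos hs']
      unfold projKernel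
      rw [if_pos, condP_eq_Qf]
      constructor
      · have := hx1Q s (by omega)
        rwa [Qf_eq x1 (Nat.le_of_succ_le hs')] at this
      · rw [mem_validSet_iff]
        refine ⟨x1, hx1L, ?_⟩
        rw [← pre_succ x1 hs']
        exact prefMatch_pre x1 hs'
    have hSeq : ∀ s ∈ Finset.range (t+1), Sf p L x1 s = Sf p L x0 s := by
      intro s hs
      rw [Finset.mem_range] at hs
      have hst : s ≤ t := by omega
      unfold Sf
      by_cases h : s + 1 ≤ T
      · rw [dif_pos h, dif_pos h]
        have hpre : pre x1 s (Nat.le_of_succ_le h) = pre x0 s (Nat.le_of_succ_le h) :=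
          pre_eq_pre_of_match hm1w hm0 hst (Nat.le_of_succ_le h)
        rw [hpre]
      · rw [dif_neg h, dif_neg h]
    have hprod : ∏ s ∈ Finset.range (t+1), Kf p L x1 s
        = prefMass p ht (Fin.snoc w y) / ∏ s ∈ Finset.range (t+1), Sf p L x0 s := by
      rw [Finset.prod_congr rfl hKf, Finset.prod_div_distrib,
        prod_ratio (Qf p x1) (t+1) (fun s hs => (hx1Q s (le_of_lt hs)).ne')
          (hx1Q 0 (Nat.zero_le _)).ne',
        Qf_zero, hp1, div_one,
        show Qf p x1 (t+1) = prefMass p ht (Fin.snoc w y) from by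
          rw [Qf_eq x1 ht, pre_eq_of_match hm1],
        Finset.prod_congr rfl hSeq]
    have hstar : prefMass μstar ht (Fin.snoc w y)
        = lMass p L ht (Fin.snoc w y) / ∑ z ∈ L, p z := by
      have hfun : μstar = fun x => (if x ∈ L then p x else 0) / ∑ z ∈ L, p z :=
        funext hμstar
      rw [hfun, prefMass_mustar]
    rw [heq, hstar, hprod] at hmarg
    unfold Phi
    rw [if_pos hPwy]
    rw [div_eq_div_iff hZC.ne' hDpos.ne'] at hmarg
    rw [div_eq_div_iff hPwy.ne' hDpos.ne']
    linarith [hmarg]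
  · -- constancy ⇒ equality
    intro hconst
    funext x
    rw [hμstar x]
    by_cases hcase : 0 < p x ∧ LV L x
    · obtain ⟨hpx, hlv⟩ := hcase
      obtain ⟨hSprod, hform⟩ := muProj_formula hp0 hp1 hnd hpx hlv
      have hμpos : 0 < muProj p L x := by
        rw [hform]; exact div_pos hpx hSprod
      have hQ : ∀ s, s ≤ T → 0 < Qf p x s := fun s hs => Qf_pos_of_ppos hp0 hpx hs
      have hkey : ∀ s (hs : s + 1 ≤ T),
          Gf p L x s / Qf p x s = (Gf p L x (s+1) / Qf p x (s+1)) * Sf p L x s := by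
        intro s hs
        have hsT : s ≤ T := Nat.le_of_succ_le hs
        have hPw : 0 < prefMass p hsT (pre x s hsT) := by
          have := hQ s hsT
          rwa [Qf_eq x hsT] at this
        have hreach : 0 < prefMass (muProj p L) (Nat.le_of_succ_le hs)
            (pre x s (Nat.le_of_succ_le hs)) :=
          lt_of_lt_of_le hμpos
            (le_prefMass_of_match (muProj_nonneg hp0 L) (prefMatch_pre x _))
        obtain ⟨c, hc, hPhi⟩ := hconst s hs (pre x s (Nat.le_of_succ_le hs)) hreach
        have hQs1 : 0 < Qf p x (s+1) := hQ (s+1) hs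
        have hPsnoc : 0 < prefMass p hs
            (Fin.snoc (pre x s (Nat.le_of_succ_le hs)) (x ⟨s, hs⟩)) := by
          rw [← Qf_succ_eq p x hs]
          exact hQs1
        have hcond : 0 < condP p hs (pre x s (Nat.le_of_succ_le hs)) (x ⟨s, hs⟩) :=
          div_pos hPsnoc hPw
        have hr1 : Gf p L x (s+1) / Qf p x (s+1) = c := by
          have hcc := hPhi (x ⟨s, hs⟩) (hlv s hs) hcond
          unfold Phi at hcc
          rw [if_pos hPsnoc] at hcc
          rw [Gf_succ_eq x hs, Qf_succ_eq p x hs]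
          exact hcc
        have hGsplit : lMass p L (Nat.le_of_succ_le hs) (pre x s (Nat.le_of_succ_le hs))
            = c * ((∑ y ∈ validSet L hs (pre x s (Nat.le_of_succ_le hs)),
                condP p hs (pre x s (Nat.le_of_succ_le hs)) y)
              * prefMass p (Nat.le_of_succ_le hs) (pre x s (Nat.le_of_succ_le hs))) := by
          rw [lMass_split L hs (pre x s (Nat.le_of_succ_le hs))]
          have e1 : ∀ y : V, lMass p L hs (Fin.snoc (pre x s (Nat.le_of_succ_le hs)) y)
              = if y ∈ validSet L hs (pre x s (Nat.le_of_succ_le hs))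
                then c * prefMass p hs (Fin.snoc (pre x s (Nat.le_of_succ_le hs)) y)
                else 0 := by
            intro y
            by_cases hy : y ∈ validSet L hs (pre x s (Nat.le_of_succ_le hs))
            · rw [if_pos hy]
              rcases eq_or_lt_of_le (prefMass_nonneg hp0 hs
                  (Fin.snoc (pre x s (Nat.le_of_succ_le hs)) y)) with hP0 | hP0
              · rw [← hP0, mul_zero]
                refine le_antisymm ?_ (lMass_nonneg hp0 L hs _)
                calc lMass p L hs (Fin.snoc (pre x s (Nat.le_of_succ_le hs)) y)
                    ≤ prefMass p hs (Fin.snoc (pre x s (Nat.le_of_succ_le hs)) y) :=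
                      lMass_le_prefMass hp0 L hs _
                  _ = 0 := hP0.symm
              · have hc2 := hPhi y hy (div_pos hP0 hPw)
                unfold Phi at hc2
                rw [if_pos hP0, div_eq_iff hP0.ne'] at hc2
                rw [hc2]
            · rw [if_neg hy, lMass_snoc_zero hy]
          rw [Finset.sum_congr rfl fun y _ => e1 y, Finset.sum_ite_mem, Finset.univ_inter,
            ← Finset.mul_sum]
          congr 1
          rw [Finset.sum_mul]
          refine Finset.sum_congr rfl fun y _ => ?_
          unfold condP
          rw [div_mul_cancel₀ _ hPw.ne']
        rw [hr1, Gf_eq x hsT, Qf_eq x hsT, Sf_eq x hs]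
        rw [hGsplit]
        field_simp
      have htele : ∀ s, s ≤ T → Gf p L x 0 / Qf p x 0
          = (Gf p L x s / Qf p x s) * ∏ u ∈ Finset.range s, Sf p L x u := by
        intro s
        induction s with
        | zero => intro _; simp
        | succ n ihn =>
          intro hs
          rw [Finset.prod_range_succ, ihn (Nat.le_of_succ_le hs), hkey n hs]
          ring
      have hT' := htele T le_rfl
      rw [Gf_zero, Qf_zero, hp1, div_one, Gf_top, Qf_top] at hT'
      by_cases hxL : x ∈ L
      · rw [if_pos hxL] at hT' ⊢
        rw [div_self hpx.ne', one_mul] at hT'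
        rw [hform, ← hT']
      · exfalso
        rw [if_neg hxL, zero_div, zero_mul] at hT'
        exact absurd hT' (ne_of_gt hZC)
    · have hμ0 : muProj p L x = 0 := by
        rcases eq_or_lt_of_le (muProj_nonneg hp0 L x) with h | h
        · exact h.symm
        · exact absurd (muProj_pos_imp hp0 hT h) hcase
      rw [hμ0]
      by_cases hpx : 0 < p x
      · have hnlv : ¬ LV L x := fun h => hcase ⟨hpx, h⟩
        have hxL : x ∉ L := fun h => hnlv (LV_of_mem_L h)
        rw [if_neg hxL, zero_div]
      · have hp0' : p x = 0 := le_antisymm (not_lt.mp hpx) (hp0 x)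
        rw [hp0']
        simp

end
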